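/- Let G act on a simplicial complex K by exchangeable vertices. Then a fundamental domain exists for this action: there is a full subcomplex L of K whose vertex set meets each vertex G-orbit exactly once. -/

import Mathlib

variable {V : Type*}

def IsComplex (F : Set (Finset V)) : Prop :=
  (∀ s ∈ F, s.Nonempty) ∧ ∀ s ∈ F, ∀ t ⊆ s, t.Nonempty → t ∈ F

def IsAuto [DecidableEq V] (F : Set (Finset V)) (φ : Equiv.Perm V) : Prop :=
  ∀ s : Finset V, s ∈ F ↔ s.image φ ∈ F

def IsExchange [DecidableEq V] (F : Set (Finset V)) (u v : V) (φ : Equiv.Perm V) : Prop :=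
  IsAuto F φ ∧ φ u = v ∧ φ v = u ∧ ∀ w : V, w ≠ u → w ≠ v → φ w = w

def Exchangeable [DecidableEq V] (F : Set (Finset V)) (u v : V) : Prop :=
  ∃ φ : Equiv.Perm V, IsExchange F u v φ

def vertices (F : Set (Finset V)) : Set V := {v | ({v} : Finset V) ∈ F}

def quotFaces (F : Set (Finset V)) (G : Subgroup (Equiv.Perm V)) : Set (Finset (Set V)) :=
  {S | ∃ s ∈ F, (↑S : Set (Set V)) = (fun v => MulAction.orbit (↥G) v) '' ↑s}

def ActsByExch [DecidableEq V] (F : Set (Finset V)) (G : Subgroup (Equiv.Perm V)) : Prop :=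
  ∃ M : Set (Equiv.Perm V), G = Subgroup.closure M ∧
    ∀ φ ∈ M, ∃ u v : V, u ≠ v ∧ IsExchange F u v φ

def fullSubFaces (F : Set (Finset V)) (W : Set V) : Set (Finset V) :=
  {s ∈ F | ↑s ⊆ W}


def autoGroup [DecidableEq V] (F : Set (Finset V)) : Subgroup (Equiv.Perm V) where
  carrier := {φ | IsAuto F φ}
  one_mem' := by intro s; simp
  mul_mem' := by
    intro g h hg hh s
    rw [show s.image ⇑(g * h) = (s.image h).image g by
      rw [Finset.image_image]; rfl]
    exact (hh s).trans (hg _)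
  inv_mem' := by
    intro g hg s
    have := hg (s.image (⇑g⁻¹))
    rw [show (s.image ⇑g⁻¹).image g = s by
      rw [Finset.image_image]
      exact Finset.image_congr (fun x _ => g.apply_symm_apply x) |>.trans (Finset.image_id)] at this
    exact this.symm

/-- If `G` acts on the simplicial complex `F` by exchangeable vertices, then a
fundamental domain exists: there is a set `W` of vertices of `F` (determining a full
subcomplex of `F`) meeting each vertex `G`-orbit exactly once. -/
theorem fundamentalDomain_exists [DecidableEq V] (F : Set (Finset V)) (hF : IsComplex F)
    (G : Subgroup (Equiv.Perm V)) (hG : ActsByExch F G) :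
    ∃ W : Set V, W ⊆ vertices F ∧
      ∀ v ∈ vertices F, ∃! x : V, x ∈ W ∧ x ∈ MulAction.orbit (↥G) v := by
  have hauto : ∀ g ∈ G, IsAuto F g := by
    obtain ⟨M, rfl, hM⟩ := hG
    intro g hg
    refine (Subgroup.closure_le (autoGroup F)).2 ?_ hg
    intro φ hφ
    obtain ⟨u, v, _, hx, _⟩ := hM φ hφ
    exact hx
  classical
  let f : V → V := fun v => (Quotient.mk (MulAction.orbitRel (↥G) V) v).out
  have hf_orbit : ∀ v : V, f v ∈ MulAction.orbit (↥G) v := by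
    intro v
    have h := Quotient.mk_out (s := MulAction.orbitRel (↥G) V) v
    exact h
  have hf_eq : ∀ u v : V, u ∈ MulAction.orbit (↥G) v → f u = f v := by
    intro u v huv
    have : (Quotient.mk (MulAction.orbitRel (↥G) V) u)
        = Quotient.mk (MulAction.orbitRel (↥G) V) v := Quotient.sound huv
    simp only [f, this]
  have hvert : ∀ v ∈ vertices F, ∀ x ∈ MulAction.orbit (↥G) v, x ∈ vertices F := by
    rintro v hv x ⟨g, rfl⟩
    have := (hauto (↑g) g.2 {v}).1 hv
    simpa [Equiv.Perm.smul_def, vertices, Subgroup.smul_def] using this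
  refine ⟨f '' vertices F, ?_, ?_⟩
  · rintro x ⟨v, hv, rfl⟩
    exact hvert v hv _ (hf_orbit v)
  · intro v hv
    refine ⟨f v, ⟨⟨v, hv, rfl⟩, hf_orbit v⟩, ?_⟩
    rintro x ⟨⟨u, hu, rfl⟩, hxv⟩
    refine hf_eq u v ?_
    rw [← MulAction.orbit_eq_iff.2 hxv, MulAction.orbit_eq_iff.2 (hf_orbit u)]
    exact MulAction.mem_orbit_self u
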